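/- Let D ⊂ ℝⁿ be compact convex with B̄_α ⊆ D for some α > 0, and let u₀ : ℝⁿ → ℝ be uniformly continuous. Define ū(x, t) := inf{u₀(y) : x ∈ y + tD} for t > 0 and ū(x, 0) = u₀(x). Then ū is a viscosity solution of ū_t + H̄(Dū) = 0 in ℝⁿ × (0, ∞) with ū(·, 0) = u₀, where H̄(p) := sup_{q ∈ D} p · q. -/

import Mathlib

open Metric Set Pointwise Filter Topology
open scoped RealInnerProductSpace

noncomputable section

/-- The support function of `D`: `H̄(p) = sup_{q ∈ D} ⟪p, q⟫`. -/
def Hbar {n : ℕ} (D : Set (EuclideanSpace ℝ (Fin n)))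
    (p : EuclideanSpace ℝ (Fin n)) : ℝ :=
  sSup ((fun q => ⟪p, q⟫) '' D)

/-- The Lax–Oleinik (Hopf–Lax) formula `ū(x,t) = inf {u₀(y) : x ∈ y + tD}`. -/
def laxOleinik {n : ℕ} (D : Set (EuclideanSpace ℝ (Fin n)))
    (u₀ : EuclideanSpace ℝ (Fin n) → ℝ)
    (x : EuclideanSpace ℝ (Fin n)) (t : ℝ) : ℝ :=
  if t = 0 then u₀ x else sInf (u₀ '' {y | x ∈ {y} + t • D})

/-- Viscosity subsolution of `u_t + H̄(Du) = 0` in `ℝⁿ × (0,∞)` with `C¹` test functions. -/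
def IsViscSubsol {n : ℕ} (D : Set (EuclideanSpace ℝ (Fin n)))
    (u : EuclideanSpace ℝ (Fin n) → ℝ → ℝ) : Prop :=
  ∀ (φ : EuclideanSpace ℝ (Fin n) → ℝ → ℝ) (x : EuclideanSpace ℝ (Fin n)) (t : ℝ),
    0 < t → ContDiff ℝ 1 (fun p : EuclideanSpace ℝ (Fin n) × ℝ => φ p.1 p.2) →
    IsLocalMax (fun p : EuclideanSpace ℝ (Fin n) × ℝ => u p.1 p.2 - φ p.1 p.2) (x, t) →
    deriv (fun s => φ x s) t + Hbar D (gradient (fun y => φ y t) x) ≤ 0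

/-- Viscosity supersolution of `u_t + H̄(Du) = 0` in `ℝⁿ × (0,∞)` with `C¹` test functions. -/
def IsViscSupersol {n : ℕ} (D : Set (EuclideanSpace ℝ (Fin n)))
    (u : EuclideanSpace ℝ (Fin n) → ℝ → ℝ) : Prop :=
  ∀ (φ : EuclideanSpace ℝ (Fin n) → ℝ → ℝ) (x : EuclideanSpace ℝ (Fin n)) (t : ℝ),
    0 < t → ContDiff ℝ 1 (fun p : EuclideanSpace ℝ (Fin n) × ℝ => φ p.1 p.2) →
    IsLocalMin (fun p : EuclideanSpace ℝ (Fin n) × ℝ => u p.1 p.2 - φ p.1 p.2) (x, t) →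
    0 ≤ deriv (fun s => φ x s) t + Hbar D (gradient (fun y => φ y t) x)

namespace LaxAux

variable {n : ℕ}

lemma lax_set_eq (D : Set (EuclideanSpace ℝ (Fin n))) (x : EuclideanSpace ℝ (Fin n)) (t : ℝ) :
    {y : EuclideanSpace ℝ (Fin n) | x ∈ ({y} : Set (EuclideanSpace ℝ (Fin n))) + t • D}
      = (fun q => x - t • q) '' D := by
  ext y
  simp only [mem_setOf_eq, Set.singleton_add, Set.image_add_left, Set.mem_preimage,
    Set.mem_smul_set, Set.mem_image]
  constructor
  · rintro ⟨q, hq, h⟩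
    exact ⟨q, hq, by rw [h]; abel⟩
  · rintro ⟨q, hq, rfl⟩
    exact ⟨q, hq, by abel⟩

lemma lax_eq (D : Set (EuclideanSpace ℝ (Fin n))) (u₀ : EuclideanSpace ℝ (Fin n) → ℝ)
    (x : EuclideanSpace ℝ (Fin n)) {t : ℝ} (ht : t ≠ 0) :
    laxOleinik D u₀ x t = sInf ((fun q => u₀ (x - t • q)) '' D) := by
  rw [laxOleinik, if_neg ht, lax_set_eq, Set.image_image]

variable {D : Set (EuclideanSpace ℝ (Fin n))} {u₀ : EuclideanSpace ℝ (Fin n) → ℝ}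

lemma cont_aux (hu : Continuous u₀) (x : EuclideanSpace ℝ (Fin n)) (t : ℝ) :
    Continuous (fun q : EuclideanSpace ℝ (Fin n) => u₀ (x - t • q)) :=
  hu.comp (continuous_const.sub (continuous_id.const_smul t))

lemma lax_bddBelow (hD : IsCompact D) (hu : Continuous u₀)
    (x : EuclideanSpace ℝ (Fin n)) (t : ℝ) :
    BddBelow ((fun q => u₀ (x - t • q)) '' D) :=
  (hD.image (cont_aux hu x t)).bddBelow

lemma lax_le_of_mem (hD : IsCompact D) (hu : Continuous u₀)
    (x : EuclideanSpace ℝ (Fin n)) {t : ℝ} (ht : t ≠ 0)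
    {q : EuclideanSpace ℝ (Fin n)} (hq : q ∈ D) :
    laxOleinik D u₀ x t ≤ u₀ (x - t • q) := by
  rw [lax_eq D u₀ x ht]
  exact csInf_le (lax_bddBelow hD hu x t) ⟨q, hq, rfl⟩

/-- Monotonicity along characteristics: `ū(x,t) ≤ ū(x-(t-s)q, s)` for `0 < s < t`, `q ∈ D`. -/
lemma lax_mono (hD : IsCompact D) (hDc : Convex ℝ D) (hne : D.Nonempty) (hu : Continuous u₀)
    (x : EuclideanSpace ℝ (Fin n)) {q : EuclideanSpace ℝ (Fin n)} (hq : q ∈ D)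
    {s t : ℝ} (hs : 0 < s) (hst : s < t) :
    laxOleinik D u₀ x t ≤ laxOleinik D u₀ (x - (t - s) • q) s := by
  have ht : (0:ℝ) < t := hs.trans hst
  rw [lax_eq D u₀ x ht.ne', lax_eq D u₀ _ hs.ne']
  refine csInf_le_csInf (lax_bddBelow hD hu x t) (hne.image _) ?_
  rintro _ ⟨q', hq', rfl⟩
  have ha : (0:ℝ) ≤ (t - s) / t := div_nonneg (by linarith) ht.le
  have hb : (0:ℝ) ≤ s / t := by positivity
  have hab : (t - s) / t + s / t = 1 := by field_simp; ring
  refine ⟨((t - s) / t) • q + (s / t) • q', hDc hq hq' ha hb hab, ?_⟩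
  show u₀ _ = u₀ _
  congr 1
  rw [smul_add, smul_smul, smul_smul, mul_div_cancel₀ _ ht.ne', mul_div_cancel₀ _ ht.ne']
  abel

/-- The infimum in the Lax–Oleinik formula is attained. -/
lemma lax_attained (hD : IsCompact D) (hne : D.Nonempty) (hu : Continuous u₀)
    (x : EuclideanSpace ℝ (Fin n)) {t : ℝ} (ht : t ≠ 0) :
    ∃ q ∈ D, laxOleinik D u₀ x t = u₀ (x - t • q) := by
  obtain ⟨q, hq, hmin⟩ := hD.exists_isMinOn hne (cont_aux hu x t).continuousOn
  refine ⟨q, hq, ?_⟩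
  rw [lax_eq D u₀ x ht]
  refine le_antisymm (csInf_le (lax_bddBelow hD hu x t) ⟨q, hq, rfl⟩) ?_
  refine le_csInf (hne.image _) ?_
  rintro _ ⟨q', hq', rfl⟩
  exact hmin hq'

/-- One-sided derivative test: left local minimum gives nonpositive derivative. -/
lemma deriv_nonpos_left {h : ℝ → ℝ} {d t : ℝ}
    (hd : HasDerivAt h d t) (H : ∀ᶠ s in 𝓝[<] t, h t ≤ h s) : d ≤ 0 := by
  have h1 : Filter.Tendsto (slope h t) (𝓝[<] t) (𝓝 d) :=
    (hasDerivAt_iff_tendsto_slope.1 hd).mono_left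
      (nhdsWithin_mono _ (fun s hs => ne_of_lt hs))
  refine le_of_tendsto h1 ?_
  filter_upwards [H, self_mem_nhdsWithin] with s hs hs'
  rw [slope_def_field]
  have hlt : s - t < 0 := sub_neg.2 hs'
  exact div_nonpos_of_nonneg_of_nonpos (by linarith) hlt.le

lemma deriv_nonneg_left {h : ℝ → ℝ} {d t : ℝ}
    (hd : HasDerivAt h d t) (H : ∀ᶠ s in 𝓝[<] t, h s ≤ h t) : 0 ≤ d := by
  have h1 : Filter.Tendsto (slope h t) (𝓝[<] t) (𝓝 d) :=
    (hasDerivAt_iff_tendsto_slope.1 hd).mono_left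
      (nhdsWithin_mono _ (fun s hs => ne_of_lt hs))
  refine ge_of_tendsto h1 ?_
  filter_upwards [H, self_mem_nhdsWithin] with s hs hs'
  rw [slope_def_field]
  have hlt : s - t < 0 := sub_neg.2 hs'
  exact div_nonneg_iff.2 (Or.inr ⟨by linarith, hlt.le⟩)

/-- Derivative of `s ↦ φ(x - (t-s)q, s)` at `s = t`. -/
lemma keyDeriv (φ : EuclideanSpace ℝ (Fin n) → ℝ → ℝ)
    (hφ : ContDiff ℝ 1 (fun p : EuclideanSpace ℝ (Fin n) × ℝ => φ p.1 p.2))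
    (x : EuclideanSpace ℝ (Fin n)) (t : ℝ) (q : EuclideanSpace ℝ (Fin n)) :
    HasDerivAt (fun s => φ (x - (t - s) • q) s)
      (deriv (fun s => φ x s) t + ⟪gradient (fun y => φ y t) x, q⟫) t := by
  set Φ : EuclideanSpace ℝ (Fin n) × ℝ → ℝ := fun p => φ p.1 p.2 with hΦdef
  have hΦd : Differentiable ℝ Φ := hφ.differentiable one_ne_zero
  set L := fderiv ℝ Φ (x, t) with hLdef
  have hL : HasFDerivAt Φ L (x, t) := (hΦd (x, t)).hasFDerivAt
  -- the curve and its derivative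
  have hc1 : HasDerivAt (fun s : ℝ => x - (t - s) • q) q t := by
    have h0 : HasDerivAt (fun s : ℝ => t - s) (-1 : ℝ) t := by
      simpa using (hasDerivAt_id t).const_sub t
    have h1 := (h0.smul_const q).const_sub x
    simpa using h1
  have hc : HasDerivAt (fun s : ℝ => ((x - (t - s) • q, s) : EuclideanSpace ℝ (Fin n) × ℝ))
      (q, 1) t := hc1.prodMk (hasDerivAt_id t)
  have hcomp : HasDerivAt (fun s => φ (x - (t - s) • q) s) (L (q, 1)) t := by
    have h2 : HasDerivAt (Φ ∘ fun s : ℝ => ((x - (t - s) • q, s)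
        : EuclideanSpace ℝ (Fin n) × ℝ)) (L (q, 1)) t := by
      refine HasFDerivAt.comp_hasDerivAt t ?_ hc
      simpa using hL
    exact h2
  -- identify L (q, 1)
  have htime : HasDerivAt (fun s => φ x s) (L (0, 1)) t := by
    have h3 : HasDerivAt (fun s : ℝ => ((x, s) : EuclideanSpace ℝ (Fin n) × ℝ)) (0, 1) t :=
      (hasDerivAt_const t x).prodMk (hasDerivAt_id t)
    exact HasFDerivAt.comp_hasDerivAt t hL h3
  have hspace : HasFDerivAt (fun y => φ y t)
      (L.comp (ContinuousLinearMap.inl ℝ (EuclideanSpace ℝ (Fin n)) ℝ)) x :=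
    by have := HasFDerivAt.comp x hL (hasFDerivAt_prodMk_left (𝕜 := ℝ) x t); exact this
  have hgrad : HasGradientAt (fun y => φ y t) (gradient (fun y => φ y t) x) x :=
    hspace.differentiableAt.hasGradientAt
  have hEq : (InnerProductSpace.toDual ℝ (EuclideanSpace ℝ (Fin n)))
      (gradient (fun y => φ y t) x)
      = L.comp (ContinuousLinearMap.inl ℝ (EuclideanSpace ℝ (Fin n)) ℝ) :=
    hgrad.hasFDerivAt.unique hspace
  have hinner : ⟪gradient (fun y => φ y t) x, q⟫ = L (q, 0) := by
    have := congrFun (congrArg (fun (f : _ →L[ℝ] ℝ) => (f : _ → ℝ)) hEq) q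
    simpa [InnerProductSpace.toDual_apply_apply] using this
  have hsum : L (q, 1) = deriv (fun s => φ x s) t + ⟪gradient (fun y => φ y t) x, q⟫ := by
    rw [htime.deriv, hinner]
    have : ((q, 1) : EuclideanSpace ℝ (Fin n) × ℝ) = (0, 1) + (q, 0) := by simp
    rw [this, map_add]
  rwa [hsum] at hcomp

end LaxAux

open LaxAux

theorem laxOleinik_is_viscosity_solution {n : ℕ}
    (D : Set (EuclideanSpace ℝ (Fin n))) (hD : IsCompact D) (hDc : Convex ℝ D)
    (α : ℝ) (hα : 0 < α) (hball : Metric.closedBall (0 : EuclideanSpace ℝ (Fin n)) α ⊆ D)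
    (u₀ : EuclideanSpace ℝ (Fin n) → ℝ) (hu₀ : UniformContinuous u₀) :
    IsViscSubsol D (laxOleinik D u₀) ∧ IsViscSupersol D (laxOleinik D u₀) ∧
      ∀ x, laxOleinik D u₀ x 0 = u₀ x := by
  have hu : Continuous u₀ := hu₀.continuous
  have hne : D.Nonempty := ⟨0, hball (mem_closedBall_self hα.le)⟩
  have hHbddAbove : ∀ p, BddAbove ((fun q => ⟪p, q⟫) '' D) := fun p =>
    (hD.image (continuous_const.inner continuous_id)).bddAbove
  refine ⟨?_, ?_, fun x => by simp [laxOleinik]⟩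
  · -- subsolution
    intro φ x t ht hφ hmax
    -- for every q ∈ D, the directional inequality holds
    have key : ∀ q ∈ D, deriv (fun s => φ x s) t + ⟪gradient (fun y => φ y t) x, q⟫ ≤ 0 := by
      intro q hq
      have hder := keyDeriv φ hφ x t q
      refine deriv_nonpos_left hder ?_
      -- eventually in 𝓝[<] t : φ x t ≤ φ (x-(t-s)q) s
      have hcont : ContinuousAt (fun s : ℝ => ((x - (t - s) • q, s)
          : EuclideanSpace ℝ (Fin n) × ℝ)) t := by
        apply ContinuousAt.prodMk
        · exact (continuous_const.sub ((continuous_const.sub continuous_id).smul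
            continuous_const)).continuousAt
        · exact continuousAt_id
      have hmax' : ∀ᶠ s in 𝓝 t,
          laxOleinik D u₀ (x - (t - s) • q) s - φ (x - (t - s) • q) s
            ≤ laxOleinik D u₀ x t - φ x t := by
        have := hcont.tendsto
        simp only [sub_self, zero_smul, sub_zero] at this
        exact this.eventually hmax
      have hIoo : Set.Ioo 0 t ∈ 𝓝[<] t := Ioo_mem_nhdsLT_of_mem ⟨ht, le_refl t⟩
      filter_upwards [nhdsWithin_le_nhds hmax', hIoo] with s hs hs'
      have hmono := lax_mono hD hDc hne hu x hq hs'.1 hs'.2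
      simp only [sub_self, zero_smul, sub_zero]
      linarith
    rw [Hbar]
    have hle : sSup ((fun q => ⟪gradient (fun y => φ y t) x, q⟫) '' D)
        ≤ -(deriv (fun s => φ x s) t) := by
      refine csSup_le (hne.image _) ?_
      rintro _ ⟨q, hq, rfl⟩
      linarith [key q hq]
    linarith
  · -- supersolution
    intro φ x t ht hφ hmin
    obtain ⟨q, hq, hattain⟩ := lax_attained hD hne hu x ht.ne'
    have hder := keyDeriv φ hφ x t q
    have h1 : 0 ≤ deriv (fun s => φ x s) t + ⟪gradient (fun y => φ y t) x, q⟫ := by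
      refine deriv_nonneg_left hder ?_
      have hcont : ContinuousAt (fun s : ℝ => ((x - (t - s) • q, s)
          : EuclideanSpace ℝ (Fin n) × ℝ)) t := by
        apply ContinuousAt.prodMk
        · exact (continuous_const.sub ((continuous_const.sub continuous_id).smul
            continuous_const)).continuousAt
        · exact continuousAt_id
      have hmin' : ∀ᶠ s in 𝓝 t,
          laxOleinik D u₀ x t - φ x t
            ≤ laxOleinik D u₀ (x - (t - s) • q) s - φ (x - (t - s) • q) s := by
        have := hcont.tendsto
        simp only [sub_self, zero_smul, sub_zero] at this
        exact this.eventually hmin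
      have hIoo : Set.Ioo 0 t ∈ 𝓝[<] t := Ioo_mem_nhdsLT_of_mem ⟨ht, le_refl t⟩
      filter_upwards [nhdsWithin_le_nhds hmin', hIoo] with s hs hs'
      -- ū(x-(t-s)q, s) ≤ u₀ ((x-(t-s)q) - s q) = u₀ (x - t q) = ū(x,t)
      have hle : laxOleinik D u₀ (x - (t - s) • q) s ≤ laxOleinik D u₀ x t := by
        have h2 := lax_le_of_mem hD hu (x - (t - s) • q) hs'.1.ne' hq
        have h3 : x - (t - s) • q - s • q = x - t • q := by module
        rw [h3, ← hattain] at h2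
        exact h2
      simp only [sub_self, zero_smul, sub_zero]
      linarith
    have h2 : ⟪gradient (fun y => φ y t) x, q⟫
        ≤ Hbar D (gradient (fun y => φ y t) x) :=
      le_csSup (hHbddAbove _) ⟨q, hq, rfl⟩
    linarith
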